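/- Super-uniformity lemma under independence: let P = (P_1,…,P_n) be a vector of mutually independent random variables with values in [0,1], fix an index i, and suppose P_i is superuniform, i.e. Pr(P_i ≤ u) ≤ u for all u ∈ [0,1]. Let f : [0,1]^n → [0,∞) be measurable and coordinatewise nonincreasing (x ≤ y coordinatewise implies f(x) ≥ f(y)). Then E[ 1{P_i ≤ f(P)} / f(P) ] ≤ 1, where the ratio is interpreted as 0 whenever the indicator equals 0 (note that superuniformity gives Pr(P_i = 0) = 0, so the event {P_i ≤ f(P), f(P) = 0} has probability zero). -/

import Mathlib

open MeasureTheory ProbabilityTheory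

open scoped ENNReal

lemma superuniformity_onedim (ν : Measure ℝ) [IsProbabilityMeasure ν]
    (hsup : ∀ u ∈ Set.Icc (0:ℝ) 1, ν (Set.Iic u) ≤ ENNReal.ofReal u)
    (hae : ∀ᵐ t ∂ν, t ∈ Set.Icc (0:ℝ) 1)
    (g : ℝ → ℝ) (hg0 : ∀ t ∈ Set.Icc (0:ℝ) 1, 0 ≤ g t)
    (hganti : ∀ s ∈ Set.Icc (0:ℝ) 1, ∀ t ∈ Set.Icc (0:ℝ) 1, s ≤ t → g t ≤ g s) :
    ∫⁻ t, (if t ≤ g t then ENNReal.ofReal (g t)⁻¹ else 0) ∂ν ≤ 1 := by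
  set A : Set ℝ := {t | t ∈ Set.Icc (0:ℝ) 1 ∧ t ≤ g t} with hA
  set T : ℝ := sSup (insert 0 A) with hTdef
  have hbdd : BddAbove (insert 0 A) := by
    refine ⟨1, ?_⟩
    rintro s (rfl | hs)
    · norm_num
    · exact hs.1.2
  have hT0 : 0 ≤ T := le_csSup hbdd (Set.mem_insert 0 A)
  have hT1 : T ≤ 1 := by
    apply csSup_le (Set.insert_nonempty _ _)
    rintro s (rfl | hs)
    · norm_num
    · exact hs.1.2
  have hAle : ∀ t ∈ A, t ≤ T := fun t ht => le_csSup hbdd (Set.mem_insert_of_mem _ ht)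
  have hgeT : ∀ t ∈ A, T ≤ g t := by
    intro t ht
    apply csSup_le (Set.insert_nonempty _ _)
    rintro s (rfl | hs)
    · exact hg0 t ht.1
    · rcases le_total s t with h | h
      · exact h.trans ht.2
      · exact hs.2.trans (hganti t ht.1 s hs.1 h)
  by_cases hT : T = 0
  · have h0 : ν {(0:ℝ)} = 0 := by
      have h1 : ν (Set.Iic (0:ℝ)) ≤ 0 := by simpa using hsup 0 (by norm_num)
      refine le_antisymm (le_trans (measure_mono fun y hy => ?_) h1) zero_le
      simp only [Set.mem_singleton_iff] at hy
      simp [hy]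
    have h0' : ∀ᵐ t ∂ν, t ≠ 0 := by
      rw [ae_iff]
      convert h0 using 2
      ext t; simp
    have hz : ∀ᵐ t ∂ν, (if t ≤ g t then ENNReal.ofReal (g t)⁻¹ else 0) = 0 := by
      filter_upwards [hae, h0'] with t ht htne
      rw [if_neg]
      intro hle
      have htA : t ∈ A := ⟨ht, hle⟩
      have := hAle t htA
      rw [hT] at this
      exact htne (le_antisymm this ht.1)
    rw [lintegral_congr_ae hz]
    simp
  · have hTpos : 0 < T := lt_of_le_of_ne hT0 (Ne.symm hT)
    calc ∫⁻ t, (if t ≤ g t then ENNReal.ofReal (g t)⁻¹ else 0) ∂ν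
        ≤ ∫⁻ t, (Set.Iic T).indicator (fun _ => ENNReal.ofReal T⁻¹) t ∂ν := by
          apply lintegral_mono_ae
          filter_upwards [hae] with t ht
          by_cases hle : t ≤ g t
          · have htA : t ∈ A := ⟨ht, hle⟩
            rw [if_pos hle, Set.indicator_of_mem (show t ∈ Set.Iic T from hAle t htA)]
            exact ENNReal.ofReal_le_ofReal (inv_anti₀ hTpos (hgeT t htA))
          · rw [if_neg hle]; exact zero_le
      _ = ENNReal.ofReal T⁻¹ * ν (Set.Iic T) := lintegral_indicator_const measurableSet_Iic _
      _ ≤ ENNReal.ofReal T⁻¹ * ENNReal.ofReal T := mul_le_mul_right (hsup T ⟨hT0, hT1⟩) _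
      _ = ENNReal.ofReal (T⁻¹ * T) := (ENNReal.ofReal_mul (inv_nonneg.mpr hT0)).symm
      _ ≤ 1 := by rw [inv_mul_cancel₀ (ne_of_gt hTpos)]; simp


/-- **Super-uniformity lemma under independence.**
Let `P = (P_1,…,P_n)` be mutually independent `[0,1]`-valued random variables, let `P_i` be
superuniform, and let `f : [0,1]^n → [0,∞)` be measurable and coordinatewise nonincreasing.
Then `E[ 1{P_i ≤ f(P)} / f(P) ] ≤ 1`, the ratio being interpreted as `0` when the indicator
vanishes (superuniformity gives `Pr(P_i = 0) = 0`, so `{P_i ≤ f(P), f(P) = 0}` is null). -/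
theorem superuniformity_lemma_indep
    {Ω : Type*} [MeasurableSpace Ω] (μ : Measure Ω) [IsProbabilityMeasure μ]
    {n : ℕ} (P : Ω → Fin n → ℝ)
    (hPmeas : ∀ j, Measurable fun ω => P ω j)
    (hPrange : ∀ ω j, P ω j ∈ Set.Icc (0 : ℝ) 1)
    (hindep : iIndepFun (m := fun _ => (inferInstance : MeasurableSpace ℝ))
      (fun j ω => P ω j) μ)
    (i : Fin n)
    (hsup : ∀ u ∈ Set.Icc (0 : ℝ) 1, μ {ω | P ω i ≤ u} ≤ ENNReal.ofReal u)
    (f : (Fin n → ℝ) → ℝ) (hf : Measurable f)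
    (hf_nonneg : ∀ x ∈ Set.Icc (0 : Fin n → ℝ) 1, 0 ≤ f x)
    (hf_anti : ∀ x ∈ Set.Icc (0 : Fin n → ℝ) 1, ∀ y ∈ Set.Icc (0 : Fin n → ℝ) 1,
      x ≤ y → f y ≤ f x) :
    ∫⁻ ω, (if P ω i ≤ f (P ω) then ENNReal.ofReal (f (P ω))⁻¹ else 0) ∂μ ≤ 1 := by
  classical
  set ν : Fin n → Measure ℝ := fun j => μ.map (fun ω => P ω j) with hν
  haveI : ∀ j, IsProbabilityMeasure (ν j) :=
    fun j => Measure.isProbabilityMeasure_map (hPmeas j).aemeasurable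
  set F : (Fin n → ℝ) → ℝ≥0∞ :=
    fun x => if x i ≤ f x then ENNReal.ofReal (f x)⁻¹ else 0 with hFdef
  have hF : Measurable F :=
    Measurable.ite (measurableSet_le (measurable_pi_apply i) hf)
      (ENNReal.measurable_ofReal.comp hf.inv) measurable_const
  have hP : Measurable P := measurable_pi_iff.mpr hPmeas
  -- law of P is the product measure
  have hmap : Measure.pi ν = μ.map P := by
    apply Measure.pi_eq
    intro s hs
    rw [Measure.map_apply hP (MeasurableSet.univ_pi hs)]
    have hpre : P ⁻¹' Set.univ.pi s = ⋂ j ∈ Finset.univ, (fun ω => P ω j) ⁻¹' s j := by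
      ext ω; simp [Set.mem_pi]
    rw [hpre, hindep.measure_inter_preimage_eq_mul Finset.univ (fun j _ => hs j)]
    exact Finset.prod_congr rfl fun j _ =>
      (Measure.map_apply (hPmeas j) (hs j)).symm
  -- bound the inner integral for points of the unit box
  have hinner : ∀ x ∈ Set.Icc (0 : Fin n → ℝ) 1,
      ∫⁻ t, F (Function.update x i t) ∂ν i ≤ 1 := by
    intro x hx
    have hupd : ∀ t ∈ Set.Icc (0:ℝ) 1,
        Function.update x i t ∈ Set.Icc (0 : Fin n → ℝ) 1 := by
      intro t ht
      constructor <;> intro j <;> rw [Function.update_apply] <;> split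
      · exact ht.1
      · exact hx.1 j
      · exact ht.2
      · exact hx.2 j
    have heq : ∀ t, F (Function.update x i t)
        = if t ≤ f (Function.update x i t) then
            ENNReal.ofReal (f (Function.update x i t))⁻¹ else 0 := by
      intro t; simp [hFdef, Function.update_self]
    simp_rw [heq]
    apply superuniformity_onedim (ν i)
    · intro u hu
      rw [hν]
      rw [Measure.map_apply (hPmeas i) measurableSet_Iic]
      exact hsup u hu
    · rw [hν]
      exact (ae_map_iff (hPmeas i).aemeasurable measurableSet_Icc).mpr
        (Filter.Eventually.of_forall fun ω => hPrange ω i)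
    · intro t ht; exact hf_nonneg _ (hupd t ht)
    · intro s hs t ht hst
      exact hf_anti _ (hupd s hs) _ (hupd t ht)
        (fun j => by
          rw [Function.update_apply, Function.update_apply]
          split
          · exact hst
          · exact le_refl _)
  -- main computation
  calc ∫⁻ ω, (if P ω i ≤ f (P ω) then ENNReal.ofReal (f (P ω))⁻¹ else 0) ∂μ
      = ∫⁻ ω, F (P ω) ∂μ := rfl
    _ = ∫⁻ x, F x ∂(μ.map P) := (lintegral_map hF hP).symm
    _ = ∫⁻ x, F x ∂(Measure.pi ν) := by rw [hmap]
    _ = (∫⋯∫⁻_Finset.univ, F ∂ν) (0 : Fin n → ℝ) := lintegral_eq_lmarginal_univ 0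
    _ = (∫⋯∫⁻_(Finset.univ.erase i),
          (fun x => ∫⁻ t, F (Function.update x i t) ∂ν i) ∂ν) (0 : Fin n → ℝ) := by
        rw [lmarginal_erase' (μ := ν) F hF (Finset.mem_univ i)]
    _ ≤ 1 := by
        unfold MeasureTheory.lmarginal
        set s : Finset (Fin n) := Finset.univ.erase i with hs
        set π : Measure ((j : s) → ℝ) := Measure.pi (fun j : s => ν j) with hπ
        have hbox : ∀ᵐ y ∂π, ∀ j : s, y j ∈ Set.Icc (0:ℝ) 1 := by
          have h1 : π (Set.univ.pi fun _ : s => Set.Icc (0:ℝ) 1) = 1 := by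
            rw [hπ, Measure.pi_pi]
            have : ∀ j : s, ν j (Set.Icc (0:ℝ) 1) = 1 := by
              intro j
              rw [hν, Measure.map_apply (hPmeas j) measurableSet_Icc]
              have : (fun ω => P ω (j:Fin n)) ⁻¹' Set.Icc (0:ℝ) 1 = Set.univ := by
                ext ω; simp [hPrange ω j]
              rw [this, measure_univ]
            simp [this]
          have h2 : π (Set.univ.pi fun _ : s => Set.Icc (0:ℝ) 1)ᶜ = 0 := by
            rw [measure_compl (MeasurableSet.univ_pi fun _ => measurableSet_Icc)
              (measure_ne_top _ _), h1, measure_univ]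
            simp
          have h3 : {y : (j : s) → ℝ | ¬ ∀ j : s, y j ∈ Set.Icc (0:ℝ) 1}
              = (Set.univ.pi fun _ : s => Set.Icc (0:ℝ) 1)ᶜ := by
            ext y
            simp only [Set.mem_setOf_eq, Set.mem_compl_iff, Set.mem_pi, Set.mem_univ,
              true_implies]
          rw [ae_iff, h3]
          exact h2
        calc ∫⁻ y, (fun x => ∫⁻ t, F (Function.update x i t) ∂ν i)
                (Function.updateFinset (0 : Fin n → ℝ) s y) ∂π
            ≤ ∫⁻ _, 1 ∂π := by
              apply lintegral_mono_ae
              filter_upwards [hbox] with y hy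
              apply hinner
              constructor <;> intro j <;>
                simp only [Function.updateFinset] <;> split
              · exact (hy ⟨j, by assumption⟩).1
              · exact le_refl _
              · exact (hy ⟨j, by assumption⟩).2
              · exact zero_le_one
          _ = 1 := by simp
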